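/- There exists a computably enumerable set A ⊆ ℕ such that A ∩ W ≠ ∅ for every infinite computably enumerable set W ⊆ ℕ, and such that for every i ≥ 1 the finite set A ∩ {0, 1, …, 2i} has strictly fewer than i elements (hence ℕ \ A is infinite). -/

import Mathlib

/-- A set of natural numbers is computably enumerable if it is the domain of a
partial computable function. -/
def CE (S : Set ℕ) : Prop :=
  ∃ f : ℕ →. ℕ, Nat.Partrec f ∧ S = f.Dom

open Nat.Partrec (Code)
open Nat.Partrec.Code

/-- `simpP e n = true` iff, decoding `n` as a pair `(x, s)`, the code `e` halts on `x`
within `s` steps and `x > 2e + 2`. -/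
def simpP (e n : ℕ) : Bool :=
  (Nat.Partrec.Code.evaln n.unpair.2 (Denumerable.ofNat Nat.Partrec.Code e) n.unpair.1).isSome
    && decide (2 * e + 2 < n.unpair.1)

/-- `simpGood e n` says no `m < n` satisfies `simpP e`. -/
def simpGood (e n : ℕ) : Bool :=
  n.rec true fun m ih => ih && !simpP e m

lemma simpGood_iff {e n : ℕ} : simpGood e n = true ↔ ∀ m < n, simpP e m = false := by
  induction n with
  | zero => simp [simpGood]
  | succ n ih =>
    have h : simpGood e (n + 1) = (simpGood e n && !simpP e n) := rfl
    rw [h, Bool.and_eq_true, ih]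
    constructor
    · rintro ⟨h1, h2⟩ m hm
      rcases Nat.lt_succ_iff_lt_or_eq.1 hm with hm' | rfl
      · exact h1 m hm'
      · simpa using h2
    · intro h1
      exact ⟨fun m hm => h1 m (hm.trans (Nat.lt_succ_self n)),
        by simp [h1 n (Nat.lt_succ_self n)]⟩

lemma primrec_simpP : Primrec₂ simpP := by
  have harg : Primrec fun q : ℕ × ℕ =>
      ((q.2.unpair.2, Denumerable.ofNat Nat.Partrec.Code q.1), q.2.unpair.1) :=
    ((Primrec.snd.comp (Primrec.unpair.comp Primrec.snd)).pair
      ((Primrec.ofNat _).comp Primrec.fst)).pair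
      (Primrec.fst.comp (Primrec.unpair.comp Primrec.snd))
  have hev : Primrec fun q : ℕ × ℕ =>
      (Nat.Partrec.Code.evaln q.2.unpair.2 (Denumerable.ofNat Nat.Partrec.Code q.1)
        q.2.unpair.1).isSome :=
    Primrec.option_isSome.comp (Nat.Partrec.Code.primrec_evaln.comp harg)
  have hlt : Primrec fun q : ℕ × ℕ => decide (2 * q.1 + 2 < q.2.unpair.1) :=
    PrimrecPred.decide (Primrec.nat_lt.comp
      (Primrec.succ.comp (Primrec.succ.comp
        (Primrec.nat_mul.comp (Primrec.const 2) Primrec.fst)))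
      (Primrec.fst.comp (Primrec.unpair.comp Primrec.snd)))
  exact (Primrec.and.comp hev hlt).to₂

lemma primrec_simpGood : Primrec₂ simpGood :=
  Primrec.nat_rec (Primrec.const true)
    ((Primrec.and.comp (Primrec.snd.comp Primrec.snd)
      (Primrec.not.comp (primrec_simpP.comp Primrec.fst (Primrec.fst.comp Primrec.snd)))).to₂)

/-- The search predicate for the simple set. -/
def simpQ (x k : ℕ) : Bool :=
  simpP k.unpair.1 k.unpair.2 && simpGood k.unpair.1 k.unpair.2 && (k.unpair.2.unpair.1 == x)

lemma primrec_simpQ : Primrec₂ simpQ := by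
  have h1 : Primrec fun q : ℕ × ℕ => simpP q.2.unpair.1 q.2.unpair.2 :=
    primrec_simpP.comp (Primrec.fst.comp (Primrec.unpair.comp Primrec.snd))
      (Primrec.snd.comp (Primrec.unpair.comp Primrec.snd))
  have h2 : Primrec fun q : ℕ × ℕ => simpGood q.2.unpair.1 q.2.unpair.2 :=
    primrec_simpGood.comp (Primrec.fst.comp (Primrec.unpair.comp Primrec.snd))
      (Primrec.snd.comp (Primrec.unpair.comp Primrec.snd))
  have h3 : Primrec fun q : ℕ × ℕ => (q.2.unpair.2.unpair.1 == q.1) :=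
    Primrec.beq.comp
      (Primrec.fst.comp (Primrec.unpair.comp (Primrec.snd.comp
        (Primrec.unpair.comp Primrec.snd)))) Primrec.fst
  exact (Primrec.and.comp (Primrec.and.comp h1 h2) h3).to₂

/-- The partial function whose domain is the simple set. -/
def simpF : ℕ →. ℕ := fun x => Nat.rfind fun k => Part.some (simpQ x k)

lemma partrec_simpF : Nat.Partrec simpF := by
  have : Partrec simpF :=
    Partrec.rfind ((primrec_simpQ.to_comp).partrec₂ :
      Partrec₂ fun x k => (Part.some (simpQ x k) : Part Bool))
  exact Partrec.nat_iff.1 this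

lemma mem_simpF_dom {x : ℕ} :
    x ∈ simpF.Dom ↔
      ∃ e n, simpP e n = true ∧ (∀ m < n, simpP e m = false) ∧ n.unpair.1 = x := by
  have h : x ∈ simpF.Dom ↔ ∃ k, simpQ x k = true := by
    rw [PFun.mem_dom]; simp only [simpF]
    constructor
    · rintro ⟨y, hy⟩
      have := Nat.rfind_spec hy
      exact ⟨y, by simpa [Part.mem_some_iff] using this⟩
    · rintro ⟨k, hk⟩
      have : (Nat.rfind fun k => Part.some (simpQ x k)).Dom :=
        Nat.rfind_dom.2 ⟨k, by simp [hk, Part.mem_some_iff], fun _ => trivial⟩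
      exact ⟨_, Part.get_mem this⟩
  rw [h]
  constructor
  · rintro ⟨k, hk⟩
    simp only [simpQ, Bool.and_eq_true, beq_iff_eq] at hk
    exact ⟨k.unpair.1, k.unpair.2, hk.1.1, simpGood_iff.1 hk.1.2, hk.2⟩
  · rintro ⟨e, n, h1, h2, h3⟩
    refine ⟨Nat.pair e n, ?_⟩
    simp [simpQ, Nat.unpair_pair, h1, h3, simpGood_iff.2 h2]

/-- There is a computably enumerable set `A ⊆ ℕ` meeting every infinite computably
enumerable set, such that for every `i ≥ 1` the set `A ∩ {0,…,2i}` has strictly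
fewer than `i` elements (hence `ℕ \ A` is infinite). -/
theorem exists_simple_set_with_card_bound :
    ∃ A : Set ℕ, CE A ∧
      (∀ W : Set ℕ, CE W → W.Infinite → (A ∩ W).Nonempty) ∧
      ∀ i : ℕ, 1 ≤ i → (A ∩ Set.Iic (2 * i)).ncard < i := by
  refine ⟨simpF.Dom, ⟨simpF, partrec_simpF, rfl⟩, ?_, ?_⟩
  · rintro W ⟨g, hg, rfl⟩ hinf
    obtain ⟨c, hc⟩ := Nat.Partrec.Code.exists_code.1 hg
    set e := Encodable.encode c with he
    obtain ⟨x, hxW, hxgt⟩ := hinf.exists_gt (2 * e + 2)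
    -- find a halting computation for x
    obtain ⟨y, hy⟩ := (PFun.mem_dom ..).1 hxW
    have hy' : y ∈ Nat.Partrec.Code.eval c x := by rw [hc]; exact hy
    obtain ⟨s, hs⟩ := Nat.Partrec.Code.evaln_complete.1 hy'
    have hpe : ∃ n, simpP e n = true := by
      refine ⟨Nat.pair x s, ?_⟩
      simp only [simpP, Nat.unpair_pair, he, Denumerable.ofNat_encode]
      simp [Option.isSome_iff_exists, hxgt]
      exact ⟨⟨y, hs⟩, by simpa [he] using hxgt⟩
    obtain ⟨n₀, hfind, hmin⟩ : ∃ n, simpP e n = true ∧ ∀ m < n, simpP e m = false :=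
      ⟨Nat.find hpe, Nat.find_spec hpe, fun m hm => Bool.eq_false_iff.2 (Nat.find_min hpe hm)⟩
    refine ⟨n₀.unpair.1, mem_simpF_dom.2 ⟨e, n₀, hfind, hmin, rfl⟩, ?_⟩
    -- n₀.unpair.1 ∈ W
    have hoc : Denumerable.ofNat Nat.Partrec.Code e = c := by
      rw [he]; exact Denumerable.ofNat_encode c
    simp only [simpP, Bool.and_eq_true] at hfind
    simp only [hoc] at hfind
    obtain ⟨z, hz⟩ := Option.isSome_iff_exists.1 hfind.1
    have : z ∈ Nat.Partrec.Code.eval c n₀.unpair.1 :=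
      Nat.Partrec.Code.evaln_sound hz
    rw [hc] at this
    exact (PFun.mem_dom ..).2 ⟨z, this⟩
  · intro i hi
    classical
    set F : ℕ → ℕ := fun e =>
      if h : ∃ n, simpP e n = true then (Nat.find h).unpair.1 else 0 with hF
    have hsub : simpF.Dom ∩ Set.Iic (2 * i) ⊆ F '' Set.Iio (i - 1) := by
      rintro x ⟨hxA, hxle⟩
      obtain ⟨e, n, h1, h2, h3⟩ := mem_simpF_dom.1 hxA
      have hex : ∃ m, simpP e m = true := ⟨n, h1⟩
      have hfind : Nat.find hex = n := by
        refine le_antisymm (Nat.find_le h1) ?_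
        by_contra hlt
        push_neg at hlt
        have := h2 _ hlt
        rw [Nat.find_spec hex] at this
        simp at this
      have hxgt : 2 * e + 2 < x := by
        simp only [simpP, Bool.and_eq_true, decide_eq_true_eq] at h1
        rw [h3] at h1
        exact h1.2
      have hei : e < i - 1 := by
        have : x ≤ 2 * i := hxle
        omega
      refine ⟨e, hei, ?_⟩
      rw [hF]
      simp only [dif_pos hex, hfind, h3]
    have hfin : (Set.Iio (i - 1) : Set ℕ).Finite := Set.finite_Iio _
    calc (simpF.Dom ∩ Set.Iic (2 * i)).ncard
        ≤ (F '' Set.Iio (i - 1)).ncard :=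
          Set.ncard_le_ncard hsub (hfin.image F)
      _ ≤ (Set.Iio (i - 1) : Set ℕ).ncard := Set.ncard_image_le hfin
      _ = i - 1 := by
          rw [← Finset.coe_range, Set.ncard_coe_finset, Finset.card_range]
      _ < i := by omega
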